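/- arXiv:1710.00437 — 2 statements merged into one kernel-verified Lean document; each statement's English description precedes it below -/
import Mathlib

section
/- Let d > 0 and let {f_ρ}_{ρ∈(0,d]} be a family of C¹ functions [0, d] → ℝ. Suppose the family of derivatives {f_ρ′}_ρ converges uniformly in {[ρ, d]}_ρ to a function g : (0, d] → ℝ such that lim_{x→0⁺} g(x) = G exists and is finite, and suppose lim_{ρ→0⁺} f_ρ(ρ) = F exists and is finite. Then the family {f_ρ}_ρ converges uniformly in {[ρ, d]}_ρ to a differentiable function f : (0, d] → ℝ with f′ = g on (0, d], namely f(x) = F + ∫₀ˣ ḡ(y) dy where ḡ is the continuous extension of g with ḡ(0) = G. -/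
open Set Filter intervalIntegral MeasureTheory

/-- If the derivatives of a family of `C¹` functions on `[0, d]` converge
uniformly in `{[ρ, d]}_ρ` to `g` having a finite limit `G` at `0⁺`, and
`f_ρ(ρ) → F`, then the family converges uniformly in `{[ρ, d]}_ρ` to
`x ↦ F + ∫₀ˣ ḡ`, which is differentiable with derivative `g` on `(0, d]`. -/
theorem stmt_10 (d : ℝ) (hd : 0 < d)
    (F F' : ℝ → ℝ → ℝ) (g : ℝ → ℝ) (G Fv : ℝ)
    (hFderiv : ∀ ρ ∈ Set.Ioc (0 : ℝ) d, ∀ τ ∈ Set.Icc (0 : ℝ) d,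
      HasDerivWithinAt (F ρ) (F' ρ τ) (Set.Icc (0 : ℝ) d) τ)
    (hF'c : ∀ ρ ∈ Set.Ioc (0 : ℝ) d, ContinuousOn (F' ρ) (Set.Icc (0 : ℝ) d))
    (hF' : ∀ ε > 0, ∃ δ > 0, ∀ ρ : ℝ, 0 < ρ → ρ < δ →
      ∀ τ ∈ Set.Icc ρ d, |F' ρ τ - g τ| < ε)
    (hG : Filter.Tendsto g (nhdsWithin 0 (Set.Ioi 0)) (nhds G))
    (hFv : Filter.Tendsto (fun ρ => F ρ ρ) (nhdsWithin 0 (Set.Ioi 0)) (nhds Fv))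
    (gbar : ℝ → ℝ) (hgbar : ∀ y ∈ Set.Ioc (0 : ℝ) d, gbar y = g y) (hgbar0 : gbar 0 = G) :
    (∀ ε > 0, ∃ δ > 0, ∀ ρ : ℝ, 0 < ρ → ρ < δ →
      ∀ τ ∈ Set.Icc ρ d, |F ρ τ - (Fv + ∫ y in (0 : ℝ)..τ, gbar y)| < ε) ∧
    (∀ x ∈ Set.Ioc (0 : ℝ) d,
      HasDerivWithinAt (fun t => Fv + ∫ y in (0 : ℝ)..t, gbar y) (g x) (Set.Ioc (0 : ℝ) d) x) := by
  -- g is continuous on (0, d]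
  have hgc : ContinuousOn g (Set.Ioc 0 d) := by
    intro x hx
    have hx2 : 0 < x / 2 := by linarith [hx.1]
    have hgIcc : ContinuousOn g (Set.Icc (x / 2) d) := by
      have tend : TendstoUniformlyOn (fun ρ => F' ρ) g (nhdsWithin 0 (Set.Ioi 0))
          (Set.Icc (x / 2) d) := by
        rw [Metric.tendstoUniformlyOn_iff]
        intro ε hε
        obtain ⟨δ, hδ, h1⟩ := hF' ε hε
        filter_upwards [Ioo_mem_nhdsGT_of_mem ⟨le_refl 0, lt_min hδ hx2⟩]
        rintro ρ ⟨hρ0, hρ⟩ y hy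
        rw [Real.dist_eq, abs_sub_comm]
        exact h1 ρ hρ0 (lt_of_lt_of_le hρ (min_le_left _ _))
          y ⟨le_trans (le_of_lt (lt_of_lt_of_le hρ (min_le_right _ _))) hy.1, hy.2⟩
      refine tend.continuousOn (Filter.Eventually.frequently ?_)
      filter_upwards [Ioo_mem_nhdsGT_of_mem
        (show (0:ℝ) ∈ Set.Ico 0 (min (x/2) d) from ⟨le_refl 0, lt_min hx2 hd⟩)]
      rintro ρ ⟨hρ0, hρ⟩
      exact (hF'c ρ ⟨hρ0, le_of_lt (lt_of_lt_of_le hρ (min_le_right _ _))⟩).mono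
        (fun y hy => ⟨le_trans (le_of_lt hx2) hy.1, hy.2⟩)
    have hmem : Set.Icc (x / 2) d ∈ nhdsWithin x (Set.Ioc 0 d) := by
      rw [mem_nhdsWithin]
      exact ⟨Set.Ioi (x / 2), isOpen_Ioi, Set.mem_Ioi.mpr (by linarith [hx.1]),
        fun y hy => ⟨le_of_lt hy.1, hy.2.2⟩⟩
    exact (hgIcc x ⟨by linarith [hx.1], hx.2⟩).mono_of_mem_nhdsWithin hmem
  -- gbar is continuous on [0, d]
  have hgbarc : ContinuousOn gbar (Set.Icc 0 d) := by
    intro x hx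
    rcases eq_or_lt_of_le hx.1 with h | h
    · subst h
      have hicc : Set.Icc (0:ℝ) d = insert 0 (Set.Ioc 0 d) := (Set.Ioc_insert_left hd.le).symm
      unfold ContinuousWithinAt
      rw [hicc, nhdsWithin_insert, hgbar0]
      refine Filter.Tendsto.sup ?_ ?_
      · exact hgbar0 ▸ tendsto_pure_nhds gbar 0
      · refine (hG.mono_left (nhdsWithin_mono _ Set.Ioc_subset_Ioi_self)).congr' ?_
        filter_upwards [self_mem_nhdsWithin] with y hy
        exact (hgbar y hy).symm
    · have h1 : ContinuousWithinAt gbar (Set.Ioc 0 d) x :=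
        (hgc x ⟨h, hx.2⟩).congr (fun y hy => hgbar y hy) (hgbar x ⟨h, hx.2⟩)
      refine h1.mono_of_mem_nhdsWithin ?_
      rw [mem_nhdsWithin]
      exact ⟨Set.Ioi 0, isOpen_Ioi, h, fun y hy => ⟨hy.1, hy.2.2⟩⟩
  -- interval integrability of gbar
  have hibl : ∀ a b : ℝ, a ∈ Set.Icc (0:ℝ) d → b ∈ Set.Icc (0:ℝ) d →
      IntervalIntegrable gbar MeasureTheory.volume a b := fun a b ha hb =>
    (hgbarc.mono (Set.uIcc_subset_Icc ha hb)).intervalIntegrable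
  -- bound on gbar
  obtain ⟨M, hM⟩ := isCompact_Icc.exists_bound_of_continuousOn hgbarc
  have hM0 : 0 ≤ M := le_trans (norm_nonneg _) (hM 0 ⟨le_refl _, hd.le⟩)
  constructor
  · -- uniform convergence
    intro ε hε
    have hd1 : (0:ℝ) < 3 * (d + 1) := by linarith
    obtain ⟨δ₁, hδ₁, h1⟩ := hF' (ε / (3 * (d + 1))) (div_pos hε hd1)
    obtain ⟨δ₂, hδ₂, h2⟩ := Metric.tendsto_nhdsWithin_nhds.1 hFv (ε / 3) (by linarith)
    refine ⟨min (min δ₁ δ₂) (min (ε / (3 * (M + 1))) d), by positivity, ?_⟩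
    intro ρ hρ0 hρδ τ hτ
    have hρδ₁ : ρ < δ₁ := lt_of_lt_of_le hρδ (le_trans (min_le_left _ _) (min_le_left _ _))
    have hρδ₂ : ρ < δ₂ := lt_of_lt_of_le hρδ (le_trans (min_le_left _ _) (min_le_right _ _))
    have hρM : ρ < ε / (3 * (M + 1)) :=
      lt_of_lt_of_le hρδ (le_trans (min_le_right _ _) (min_le_left _ _))
    have hρd : ρ < d := lt_of_lt_of_le hρδ (le_trans (min_le_right _ _) (min_le_right _ _))
    have hρIoc : ρ ∈ Set.Ioc (0:ℝ) d := ⟨hρ0, hρd.le⟩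
    have hsub : Set.Icc ρ τ ⊆ Set.Icc (0:ℝ) d :=
      fun y hy => ⟨le_trans hρ0.le hy.1, le_trans hy.2 hτ.2⟩
    -- FTC on [ρ, τ]
    have key : ∫ y in ρ..τ, F' ρ y = F ρ τ - F ρ ρ := by
      refine intervalIntegral.integral_eq_sub_of_hasDeriv_right_of_le hτ.1 ?_ ?_ ?_
      · exact fun y hy => ((hFderiv ρ hρIoc y (hsub hy)).continuousWithinAt).mono hsub
      · intro y hy
        have hyd : Set.Icc (0:ℝ) d ∈ nhds y :=
          Icc_mem_nhds (lt_trans hρ0 hy.1) (lt_of_lt_of_le hy.2 hτ.2)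
        exact ((hFderiv ρ hρIoc y ⟨(le_trans hρ0.le hy.1.le), le_trans hy.2.le hτ.2⟩).hasDerivAt
          hyd).hasDerivWithinAt
      · refine ((hF'c ρ hρIoc).mono ?_).intervalIntegrable
        exact (Set.uIcc_subset_Icc ⟨hρ0.le, hρd.le⟩ ⟨le_trans hρ0.le hτ.1, hτ.2⟩)
    have hgint1 : IntervalIntegrable gbar MeasureTheory.volume 0 ρ :=
      hibl 0 ρ ⟨le_refl _, hd.le⟩ ⟨hρ0.le, hρd.le⟩
    have hgint2 : IntervalIntegrable gbar MeasureTheory.volume ρ τ :=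
      hibl ρ τ ⟨hρ0.le, hρd.le⟩ ⟨le_trans hρ0.le hτ.1, hτ.2⟩
    have hF'int : IntervalIntegrable (F' ρ) MeasureTheory.volume ρ τ := by
      refine ((hF'c ρ hρIoc).mono ?_).intervalIntegrable
      exact (Set.uIcc_subset_Icc ⟨hρ0.le, hρd.le⟩ ⟨le_trans hρ0.le hτ.1, hτ.2⟩)
    have split : (∫ y in (0:ℝ)..τ, gbar y) =
        (∫ y in (0:ℝ)..ρ, gbar y) + ∫ y in ρ..τ, gbar y :=
      (intervalIntegral.integral_add_adjacent_intervals hgint1 hgint2).symm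
    have eq1 : F ρ τ - (Fv + ∫ y in (0:ℝ)..τ, gbar y) =
        (F ρ ρ - Fv) + (∫ y in ρ..τ, (F' ρ y - gbar y)) - ∫ y in (0:ℝ)..ρ, gbar y := by
      rw [intervalIntegral.integral_sub hF'int hgint2, split, key]; ring
    have bA : |F ρ ρ - Fv| < ε / 3 := by
      have := h2 (Set.mem_Ioi.2 hρ0) (by rw [Real.dist_eq, sub_zero, abs_of_pos hρ0]; exact hρδ₂)
      rwa [Real.dist_eq] at this
    have bB : |∫ y in ρ..τ, (F' ρ y - gbar y)| ≤ (ε / (3 * (d + 1))) * |τ - ρ| := by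
      rw [← Real.norm_eq_abs (∫ y in ρ..τ, (F' ρ y - gbar y))]
      refine intervalIntegral.norm_integral_le_of_norm_le_const ?_
      intro y hy
      rw [Set.uIoc_of_le hτ.1] at hy
      have hyI : y ∈ Set.Ioc (0:ℝ) d := ⟨lt_trans hρ0 hy.1, le_trans hy.2 hτ.2⟩
      rw [Real.norm_eq_abs, hgbar y hyI]
      exact le_of_lt (h1 ρ hρ0 hρδ₁ y ⟨hy.1.le, le_trans hy.2 hτ.2⟩)
    have bB' : |∫ y in ρ..τ, (F' ρ y - gbar y)| < ε / 3 := by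
      have hτρ : |τ - ρ| ≤ d := by
        rw [abs_of_nonneg (by linarith [hτ.1])]
        linarith [hτ.2, hρ0]
      have : (ε / (3 * (d + 1))) * |τ - ρ| ≤ (ε / (3 * (d + 1))) * d :=
        mul_le_mul_of_nonneg_left hτρ (le_of_lt (div_pos hε hd1))
      refine lt_of_le_of_lt (le_trans bB this) ?_
      rw [div_mul_eq_mul_div, div_lt_iff₀ hd1]
      nlinarith
    have bC : |∫ y in (0:ℝ)..ρ, gbar y| < ε / 3 := by
      have hb : |∫ y in (0:ℝ)..ρ, gbar y| ≤ M * |ρ - 0| := by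
        rw [← Real.norm_eq_abs (∫ y in (0:ℝ)..ρ, gbar y)]
        refine intervalIntegral.norm_integral_le_of_norm_le_const ?_
        intro y hy
        rw [Set.uIoc_of_le hρ0.le] at hy
        exact hM y ⟨hy.1.le, le_trans hy.2 hρd.le⟩
      rw [sub_zero, abs_of_pos hρ0] at hb
      have hM1 : (0:ℝ) < 3 * (M + 1) := by linarith
      refine lt_of_le_of_lt hb ?_
      have : M * ρ < M * (ε / (3 * (M + 1))) ∨ M = 0 := by
        rcases eq_or_lt_of_le hM0 with h | h
        · right; exact h.symm
        · left; exact mul_lt_mul_of_pos_left hρM h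
      rcases this with h | h
      · refine lt_of_lt_of_le h ?_
        rw [mul_div_assoc']
        rw [div_le_div_iff₀ hM1 (by norm_num : (0:ℝ) < 3)]
        nlinarith
      · rw [h, zero_mul]; linarith
    calc |F ρ τ - (Fv + ∫ y in (0:ℝ)..τ, gbar y)|
        = |(F ρ ρ - Fv) + (∫ y in ρ..τ, (F' ρ y - gbar y)) - ∫ y in (0:ℝ)..ρ, gbar y| := by
          rw [eq1]
      _ ≤ |F ρ ρ - Fv| + |∫ y in ρ..τ, (F' ρ y - gbar y)| + |∫ y in (0:ℝ)..ρ, gbar y| := by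
          exact le_trans (abs_sub _ _) (by gcongr; exact abs_add_le _ _)
      _ < ε / 3 + ε / 3 + ε / 3 := by gcongr
      _ = ε := by ring
  · -- differentiability
    intro x hx
    have hx' : x ∈ Set.Icc (0:ℝ) d := ⟨hx.1.le, hx.2⟩
    have hint : IntervalIntegrable gbar MeasureTheory.volume 0 x :=
      hibl 0 x ⟨le_refl _, hd.le⟩ hx'
    have haesm : MeasureTheory.AEStronglyMeasurable gbar
        (MeasureTheory.volume.restrict (Set.Icc (0:ℝ) d)) :=
      hgbarc.aestronglyMeasurable measurableSet_Icc
    have hmain : HasDerivWithinAt (fun t => ∫ y in (0:ℝ)..t, gbar y) (gbar x)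
        (Set.Ioc 0 d) x := by
      rcases eq_or_lt_of_le hx.2 with h | h
      · -- x = d
        have hmem : Set.Icc (0:ℝ) d ∈ nhdsWithin x (Set.Iic x) := by
          rw [mem_nhdsWithin]
          exact ⟨Set.Ioi 0, isOpen_Ioi, hx.1, fun y hy => ⟨hy.1.le, h ▸ hy.2⟩⟩
        have hcw : ContinuousWithinAt gbar (Set.Iic x) x :=
          (hgbarc x hx').mono_of_mem_nhdsWithin hmem
        have : HasDerivWithinAt (fun t => ∫ y in (0:ℝ)..t, gbar y) (gbar x) (Set.Iic x) x :=
          intervalIntegral.integral_hasDerivWithinAt_right hint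
            ⟨Set.Icc (0:ℝ) d, hmem, haesm⟩ hcw
        exact this.mono (h ▸ Set.Ioc_subset_Iic_self)
      · -- x < d
        have hmem : Set.Icc (0:ℝ) d ∈ nhds x := Icc_mem_nhds hx.1 h
        have hca : ContinuousAt gbar x := hgbarc.continuousAt hmem
        exact (intervalIntegral.integral_hasDerivAt_right hint
          ⟨Set.Icc (0:ℝ) d, hmem, haesm⟩ hca).hasDerivWithinAt
    rw [hgbar x hx] at hmain
    exact hmain.const_add Fv
end

section
/- Let d > 0 and let {S_ρ}_{ρ∈(0,d]} be a family of C¹ functions [−d, d] → ℝ that converges uniformly in {[−d, −ρ] ∪ [ρ, d]}_ρ to a function S : [−d, d] \ {0} → ℝ whose one-sided limits S₋ = lim_{τ→0⁻} S(τ) and S₊ = lim_{τ→0⁺} S(τ) exist and are finite. Then lim_{ρ→0⁺} ∫_{−ρ}^{ρ} S_ρ′(τ) dτ = S₊ − S₋. -/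
/-- Pillbox integration of the derivative of the slope function: the integral
of `S_ρ′` over `[−ρ, ρ]` tends to the jump `S₊ − S₋` of the limit function. -/
theorem stmt_17 (d : ℝ) (hd : 0 < d)
    (S S' : ℝ → ℝ → ℝ) (Slim : ℝ → ℝ) (Sm Sp : ℝ)
    (hSderiv : ∀ ρ ∈ Set.Ioc (0 : ℝ) d, ∀ τ ∈ Set.Icc (-d) d,
      HasDerivWithinAt (S ρ) (S' ρ τ) (Set.Icc (-d) d) τ)
    (hS'c : ∀ ρ ∈ Set.Ioc (0 : ℝ) d, ContinuousOn (S' ρ) (Set.Icc (-d) d))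
    (hconv : ∀ ε > 0, ∃ δ > 0, ∀ ρ : ℝ, 0 < ρ → ρ < δ →
      ∀ τ ∈ Set.Icc (-d) (-ρ) ∪ Set.Icc ρ d, |S ρ τ - Slim τ| < ε)
    (hSm : Filter.Tendsto Slim (nhdsWithin 0 (Set.Iio 0)) (nhds Sm))
    (hSp : Filter.Tendsto Slim (nhdsWithin 0 (Set.Ioi 0)) (nhds Sp)) :
    Filter.Tendsto (fun ρ => ∫ τ in (-ρ)..ρ, S' ρ τ)
      (nhdsWithin 0 (Set.Ioi 0)) (nhds (Sp - Sm)) := by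
  have hIoo : Set.Ioo (0:ℝ) d ∈ nhdsWithin 0 (Set.Ioi 0) :=
    Ioo_mem_nhdsGT_of_mem (Set.left_mem_Ico.2 hd)
  -- FTC: eventually the integral equals S ρ ρ - S ρ (-ρ)
  have key : ∀ᶠ ρ in nhdsWithin 0 (Set.Ioi 0),
      (∫ τ in (-ρ)..ρ, S' ρ τ) = S ρ ρ - S ρ (-ρ) := by
    filter_upwards [hIoo] with ρ hρ
    obtain ⟨hρ0, hρd⟩ := hρ
    have hρd' : ρ ∈ Set.Ioc (0:ℝ) d := ⟨hρ0, hρd.le⟩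
    have hle : -ρ ≤ ρ := by linarith
    have hsub : Set.Icc (-ρ) ρ ⊆ Set.Icc (-d) d :=
      Set.Icc_subset_Icc (by linarith) hρd.le
    refine intervalIntegral.integral_eq_sub_of_hasDerivAt (f := S ρ) (f' := S' ρ) ?_ ?_
    · intro τ hτ
      rw [Set.uIcc_of_le hle] at hτ
      have hmem : Set.Icc (-d) d ∈ nhds τ := by
        apply Icc_mem_nhds
        · linarith [hτ.1]
        · linarith [hτ.2]
      exact (hSderiv ρ hρd' τ (hsub hτ)).hasDerivAt hmem
    · apply ContinuousOn.intervalIntegrable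
      rw [Set.uIcc_of_le hle]
      exact (hS'c ρ hρd').mono hsub
  -- error terms tend to 0
  have herr : ∀ (f : ℝ → ℝ), (∀ ρ ∈ Set.Ioo (0:ℝ) d,
      f ρ ∈ Set.Icc (-d) (-ρ) ∪ Set.Icc ρ d) →
      Filter.Tendsto (fun ρ => S ρ (f ρ) - Slim (f ρ))
        (nhdsWithin 0 (Set.Ioi 0)) (nhds 0) := by
    intro f hf
    rw [Metric.tendsto_nhds]
    intro ε hε
    obtain ⟨δ, hδ0, hδ⟩ := hconv ε hε
    have hmem : Set.Ioo (0:ℝ) (min δ d) ∈ nhdsWithin 0 (Set.Ioi 0) :=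
      Ioo_mem_nhdsGT_of_mem (Set.left_mem_Ico.2 (lt_min hδ0 hd))
    filter_upwards [hmem] with ρ hρ
    obtain ⟨hρ0, hρm⟩ := hρ
    rw [Real.dist_eq, sub_zero]
    exact hδ ρ hρ0 (hρm.trans_le (min_le_left _ _)) _
      (hf ρ ⟨hρ0, hρm.trans_le (min_le_right _ _)⟩)
  have h1 : Filter.Tendsto (fun ρ => S ρ ρ - Slim ρ)
      (nhdsWithin 0 (Set.Ioi 0)) (nhds 0) :=
    herr id (fun ρ hρ => Or.inr ⟨le_refl ρ, hρ.2.le⟩)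
  have h2 : Filter.Tendsto (fun ρ => S ρ (-ρ) - Slim (-ρ))
      (nhdsWithin 0 (Set.Ioi 0)) (nhds 0) :=
    herr (fun ρ => -ρ) (fun ρ hρ => Or.inl ⟨neg_le_neg hρ.2.le, le_refl _⟩)
  -- Slim parts
  have hp : Filter.Tendsto (fun ρ => Slim ρ) (nhdsWithin 0 (Set.Ioi 0)) (nhds Sp) := hSp
  have hneg : Filter.Tendsto (fun ρ : ℝ => -ρ) (nhdsWithin 0 (Set.Ioi 0))
      (nhdsWithin 0 (Set.Iio 0)) := by
    apply Filter.Tendsto.inf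
    · simpa using (continuous_neg.tendsto (0:ℝ))
    · rw [Filter.tendsto_principal]
      filter_upwards [Filter.mem_principal_self _] with x hx
      simpa using hx
  have hm : Filter.Tendsto (fun ρ => Slim (-ρ)) (nhdsWithin 0 (Set.Ioi 0)) (nhds Sm) :=
    hSm.comp hneg
  have hmain : Filter.Tendsto (fun ρ => S ρ ρ - S ρ (-ρ))
      (nhdsWithin 0 (Set.Ioi 0)) (nhds (Sp - Sm)) := by
    have h := (h1.sub h2).add (hp.sub hm)
    have heq : (0:ℝ) - 0 + (Sp - Sm) = Sp - Sm := by ring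
    rw [heq] at h
    exact h.congr fun ρ => by ring
  exact hmain.congr' (key.mono fun ρ h => h.symm)
end
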